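/- Let δ, κ, λ > 0 and μ ≥ 0 with δλ − κ > 0, let α be the unique solution in (0, ∞) of tanh(√(2δ)·α) = √(2δ)(δλ − κ)α / (δ(δλ − κ)α² − (κ + δμ)), and set A = (δ(δλ − κ)α² − (κ + δμ))/(δ² cosh(√(2δ)α)). Then A cosh(√(2δ)x) + (κ/δ)x² + (κ + δμ)/δ² ≥ λx² for all x ∈ [0, α]; equivalently, the function f(x) = (δ(δλ − κ)x² − (κ + δμ))/cosh(√(2δ)x) satisfies f(x) ≤ f(α) for all x ∈ [0, α]. -/

import Mathlib

lemma aux_cmul (c t : ℝ) : HasDerivAt (fun t : ℝ => c * t) c t := by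
  simpa using (hasDerivAt_id t).const_mul c

lemma aux_hderiv (K c b t : ℝ) :
    HasDerivAt (fun t => K * c * Real.sinh (c * t) - 2 * b * t)
      (K * c * (Real.cosh (c * t) * c) - 2 * b) t := by
  have h3 := (((aux_cmul c t).sinh).const_mul (K * c)).sub ((hasDerivAt_id t).const_mul (2 * b))
  exact h3.congr_deriv (by ring)

lemma aux_h2deriv (K c b t : ℝ) :
    HasDerivAt (fun t => K * c * (Real.cosh (c * t) * c) - 2 * b)
      (K * c * (Real.sinh (c * t) * c * c)) t := by
  have h3 := ((((aux_cmul c t).cosh).mul_const c).const_mul (K * c)).sub_const (2 * b)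
  convert h3 using 1 <;> ring

lemma aux_gderiv (K c b t : ℝ) :
    HasDerivAt (fun t => K * Real.cosh (c * t) - b * t ^ 2)
      (K * c * Real.sinh (c * t) - 2 * b * t) t := by
  have h4 : HasDerivAt (fun t : ℝ => t ^ 2) (2 * t) t := by
    simpa using hasDerivAt_pow 2 t
  have h3 := (((aux_cmul c t).cosh).const_mul K).sub (h4.const_mul b)
  exact h3.congr_deriv (by ring)

lemma aux_main (c b K α : ℝ) (hc : 0 < c) (hb : 0 < b) (hK : 0 < K) (hα : 0 < α)
    (hderiv : K * c * Real.sinh (c * α) = 2 * b * α) :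
    ∀ x ∈ Set.Icc (0:ℝ) α,
      K * Real.cosh (c * α) - b * α ^ 2 ≤ K * Real.cosh (c * x) - b * x ^ 2 := by
  set h : ℝ → ℝ := fun t => K * c * Real.sinh (c * t) - 2 * b * t with hh
  set g : ℝ → ℝ := fun t => K * Real.cosh (c * t) - b * t ^ 2 with hg
  have hderivh : deriv h = fun t => K * c * (Real.cosh (c * t) * c) - 2 * b := by
    funext s; exact (aux_hderiv K c b s).deriv
  have hconv : ConvexOn ℝ (Set.Icc (0:ℝ) α) h := by
    apply convexOn_of_deriv2_nonneg (convex_Icc _ _)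
    · exact Continuous.continuousOn (by continuity)
    · exact fun t _ => (aux_hderiv K c b t).differentiableAt.differentiableWithinAt
    · rw [hderivh]
      exact fun t _ => (aux_h2deriv K c b t).differentiableAt.differentiableWithinAt
    · intro t ht
      rw [Function.iterate_succ, Function.iterate_one, Function.comp_apply, hderivh]
      rw [(aux_h2deriv K c b t).deriv]
      rw [interior_Icc] at ht
      have h1 : 0 ≤ Real.sinh (c * t) :=
        Real.sinh_nonneg_iff.2 (mul_nonneg hc.le ht.1.le)
      have := mul_nonneg (mul_nonneg (mul_nonneg (mul_nonneg hK.le hc.le) h1) hc.le) hc.le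
      linarith [this]
  -- h ≤ 0 on [0, α]
  have hle : ∀ x ∈ Set.Icc (0:ℝ) α, h x ≤ 0 := by
    intro x hx
    have h0 : h 0 = 0 := by simp [hh]
    have hA : h α = 0 := by simp [hh, hderiv]
    have := hconv.le_on_segment (x := (0:ℝ)) (y := α)
      (Set.left_mem_Icc.2 hα.le) (Set.right_mem_Icc.2 hα.le)
      (by rw [segment_eq_Icc hα.le]; exact hx)
    simpa [h0, hA] using this
  -- g is antitone on [0, α]
  have hanti : AntitoneOn g (Set.Icc (0:ℝ) α) := by
    apply antitoneOn_of_deriv_nonpos (convex_Icc _ _)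
    · exact Continuous.continuousOn (by continuity)
    · exact fun t _ => (aux_gderiv K c b t).differentiableAt.differentiableWithinAt
    · intro t ht
      rw [(aux_gderiv K c b t).deriv]
      rw [interior_Icc] at ht
      exact hle t ⟨ht.1.le, ht.2.le⟩
  intro x hx
  exact hanti hx (Set.right_mem_Icc.2 hα.le) hx.2

/-- With `α` the unique positive root of the free-boundary equation and
`A = (δ(δλ − κ)α² − (κ + δμ))/(δ² cosh(√(2δ)α))`, one has
`A cosh(√(2δ)x) + (κ/δ)x² + (κ + δμ)/δ² ≥ λx²` for all `x ∈ [0, α]`; equivalently,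
`f(x) = (δ(δλ − κ)x² − (κ + δμ))/cosh(√(2δ)x)` satisfies `f(x) ≤ f(α)` on `[0, α]`. -/
theorem statement8 (δ κ lam μ α A : ℝ) (hδ : 0 < δ) (hκ : 0 < κ) (hlam : 0 < lam)
    (hμ : 0 ≤ μ) (h : 0 < δ*lam - κ) (hα : 0 < α)
    (heq : Real.tanh (Real.sqrt (2*δ) * α) =
      Real.sqrt (2*δ) * (δ*lam - κ) * α / (δ*(δ*lam - κ)*α^2 - (κ + δ*μ)))
    (hA : A = (δ*(δ*lam - κ)*α^2 - (κ + δ*μ)) / (δ^2 * Real.cosh (Real.sqrt (2*δ) * α))) :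
    (∀ x : ℝ, 0 ≤ x → x ≤ α →
      lam * x^2 ≤ A * Real.cosh (Real.sqrt (2*δ) * x) + (κ/δ) * x^2 + (κ + δ*μ)/δ^2) ∧
    (∀ x : ℝ, 0 ≤ x → x ≤ α →
      (δ*(δ*lam - κ)*x^2 - (κ + δ*μ)) / Real.cosh (Real.sqrt (2*δ) * x) ≤
        (δ*(δ*lam - κ)*α^2 - (κ + δ*μ)) / Real.cosh (Real.sqrt (2*δ) * α)) := by
  set c : ℝ := Real.sqrt (2*δ) with hcdef
  have hc : 0 < c := Real.sqrt_pos.2 (by linarith)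
  have hc2 : c^2 = 2*δ := Real.sq_sqrt (by linarith)
  set b : ℝ := δ*(δ*lam - κ) with hbdef
  have hb : 0 < b := by positivity
  set d : ℝ := κ + δ*μ with hddef
  have hd : 0 < d := by positivity
  set D : ℝ := b*α^2 - d with hDdef
  have hcoshα : 0 < Real.cosh (c*α) := Real.cosh_pos _
  have htanh : 0 < Real.tanh (c*α) := by
    rw [Real.tanh_eq_sinh_div_cosh]
    exact div_pos (Real.sinh_pos_iff.2 (by positivity)) hcoshα
  have hnum : 0 < c * (δ*lam - κ) * α := by positivity
  have hD : 0 < D := by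
    rcases lt_trichotomy D 0 with hlt | heq0 | hgt
    · have : Real.tanh (c*α) < 0 := by
        rw [heq]; exact div_neg_of_pos_of_neg hnum hlt
      linarith
    · rw [heq, heq0, div_zero] at htanh; linarith
    · exact hgt
  set K : ℝ := D / Real.cosh (c*α) with hKdef
  have hK : 0 < K := div_pos hD hcoshα
  have hKcosh : K * Real.cosh (c*α) = D := div_mul_cancel₀ D (ne_of_gt hcoshα)
  have hderiv : K * c * Real.sinh (c*α) = 2*b*α := by
    have ht : Real.sinh (c*α) / Real.cosh (c*α) = c * (δ*lam - κ) * α / D := by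
      rw [← Real.tanh_eq_sinh_div_cosh]; exact heq
    have hs : Real.sinh (c*α) * D = c * (δ*lam - κ) * α * Real.cosh (c*α) := by
      field_simp at ht; linarith [ht]
    have hKs : K * Real.sinh (c*α) = c * (δ*lam - κ) * α := by
      rw [hKdef, div_mul_eq_mul_div, div_eq_iff (ne_of_gt hcoshα)]
      linarith [hs]
    have : K * c * Real.sinh (c*α) = c * (c * (δ*lam - κ) * α) := by
      rw [← hKs]; ring
    rw [this, hbdef]; linear_combination ((δ*lam-κ)*α) * hc2
  have key : ∀ x : ℝ, 0 ≤ x → x ≤ α → b*x^2 - d ≤ K * Real.cosh (c*x) := by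
    intro x hx0 hxα
    have := aux_main c b K α hc hb hK hα hderiv x ⟨hx0, hxα⟩
    rw [hKcosh] at this
    linarith
  constructor
  · intro x hx0 hxα
    have hδ2 : (0:ℝ) < δ^2 := by positivity
    have hAK : A = K / δ^2 := by
      rw [hA, hKdef, div_div, mul_comm]
    have e : K/δ^2 * Real.cosh (c*x) + κ/δ * x^2 + d/δ^2
        = (K * Real.cosh (c*x) + κ*δ*x^2 + d)/δ^2 := by
      field_simp
    rw [hAK, e, le_div_iff₀ hδ2]
    have hkx := key x hx0 hxα
    have hb2 : b * x^2 = δ*(δ*lam-κ) * x^2 := by rw [hbdef]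
    linarith [hkx, hb2]
  · intro x hx0 hxα
    have hcoshx : 0 < Real.cosh (c*x) := Real.cosh_pos _
    rw [div_le_div_iff₀ hcoshx hcoshα]
    have hkx := key x hx0 hxα
    have h2 := mul_le_mul_of_nonneg_right hkx hcoshα.le
    have h3 : K * Real.cosh (c*x) * Real.cosh (c*α) = D * Real.cosh (c*x) := by
      rw [show K * Real.cosh (c*x) * Real.cosh (c*α)
          = K * Real.cosh (c*α) * Real.cosh (c*x) from by ring, hKcosh]
    linarith [h2, h3]
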